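/- Let α : [0,1] → ℝ be Lipschitz, E ⊆ [0,1], and (A^n) a sequence of finite partitions of [0,1] into sets A₁ⁿ,…,A_nⁿ with mesh |A^n| = max_i diam(A_iⁿ) → 0. Define d_*(E∩A) = max(1, inf_{t∈E∩A} α(t))·dimH(E∩A) and d^*(E∩A) = max(1, sup_{t∈E∩A} α(t))·dimH(E∩A) (interpreted as 0 when E∩A = ∅). Then limsup_{n→∞} max_{i=1}^n d^*(E ∩ A_iⁿ) = limsup_{n→∞} max_{i=1}^n d_*(E ∩ A_iⁿ), and the same equality holds with liminf in place of limsup. -/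

import Mathlib

open MeasureTheory Set Filter

open Classical in
noncomputable def dUpper (α : ℝ → ℝ) (E S : Set ℝ) : ℝ :=
  if (E ∩ S).Nonempty then
    max 1 (sSup (α '' (E ∩ S))) * (dimH (E ∩ S)).toReal else 0

open Classical in
noncomputable def dLower (α : ℝ → ℝ) (E S : Set ℝ) : ℝ :=
  if (E ∩ S).Nonempty then
    max 1 (sInf (α '' (E ∩ S))) * (dimH (E ∩ S)).toReal else 0

theorem limsup_dUpper_eq_limsup_dLower
    (α : ℝ → ℝ) (K : ℝ)
    (hlip : ∀ s ∈ Set.Icc (0 : ℝ) 1, ∀ t ∈ Set.Icc (0 : ℝ) 1,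
      |α s - α t| ≤ K * |s - t|)
    (E : Set ℝ) (hE : E ⊆ Set.Icc 0 1)
    (A : (n : ℕ) → Fin (n + 1) → Set ℝ)
    (hcover : ∀ n, ⋃ i, A n i = Set.Icc 0 1)
    (hdisj : ∀ n, Pairwise (Function.onFun Disjoint (A n)))
    (hmesh : Tendsto (fun n => ⨆ i, Metric.diam (A n i)) atTop (nhds 0)) :
    limsup (fun n => ⨆ i, dUpper α E (A n i)) atTop
        = limsup (fun n => ⨆ i, dLower α E (A n i)) atTop ∧
      liminf (fun n => ⨆ i, dUpper α E (A n i)) atTop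
        = liminf (fun n => ⨆ i, dLower α E (A n i)) atTop := by
  classical
  have hK : 0 ≤ K := by
    have h := hlip 0 ⟨le_rfl, zero_le_one⟩ 1 ⟨zero_le_one, le_rfl⟩
    have h0 : (0:ℝ) ≤ |α 0 - α 1| := abs_nonneg _
    have : |(0:ℝ) - 1| = 1 := by norm_num
    rw [this, mul_one] at h
    linarith
  -- each piece is contained in [0,1]
  have hsub : ∀ n i, A n i ⊆ Set.Icc (0:ℝ) 1 := fun n i => by
    rw [← hcover n]; exact subset_iUnion _ i
  have hbddA : ∀ n i, Bornology.IsBounded (A n i) := fun n i =>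
    (Metric.isBounded_Icc (0:ℝ) 1).subset (hsub n i)
  -- bounds on α on [0,1]
  have hαbd : ∀ t ∈ Set.Icc (0:ℝ) 1, α t ∈ Set.Icc (α 0 - K) (α 0 + K) := by
    intro t ht
    have h := hlip t ht 0 ⟨le_rfl, zero_le_one⟩
    have h1 : |t - 0| ≤ 1 := by
      rw [sub_zero, abs_of_nonneg ht.1]; exact ht.2
    have h2 : |α t - α 0| ≤ K := by
      calc |α t - α 0| ≤ K * |t - 0| := h
        _ ≤ K * 1 := by nlinarith [abs_nonneg (t - 0)]
        _ = K := mul_one K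
    have := abs_le.1 h2
    constructor <;> linarith [this.1, this.2]
  set C : ℝ := max 1 (|α 0| + K) with hC
  have hC1 : (1:ℝ) ≤ C := le_max_left _ _
  -- facts about a nonempty piece
  have himg : ∀ n i, (E ∩ A n i).Nonempty →
      (α '' (E ∩ A n i)).Nonempty ∧ BddAbove (α '' (E ∩ A n i)) ∧
        BddBelow (α '' (E ∩ A n i)) ∧ sSup (α '' (E ∩ A n i)) ≤ |α 0| + K := by
    intro n i hne
    have hSsub : E ∩ A n i ⊆ Set.Icc (0:ℝ) 1 := fun x hx => hE hx.1
    have himgsub : α '' (E ∩ A n i) ⊆ Set.Icc (α 0 - K) (α 0 + K) := by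
      rintro y ⟨t, ht, rfl⟩; exact hαbd t (hSsub ht)
    have hba : BddAbove (α '' (E ∩ A n i)) :=
      ⟨α 0 + K, fun y hy => (himgsub hy).2⟩
    have hbb : BddBelow (α '' (E ∩ A n i)) :=
      ⟨α 0 - K, fun y hy => (himgsub hy).1⟩
    refine ⟨hne.image α, hba, hbb, ?_⟩
    refine csSup_le (hne.image α) fun y hy => ?_
    have := (himgsub hy).2
    have : y ≤ α 0 + K := this
    calc y ≤ α 0 + K := this
      _ ≤ |α 0| + K := by linarith [le_abs_self (α 0)]
  -- dimension is between 0 and 1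
  have hdim : ∀ (S : Set ℝ), (dimH S).toReal ≤ 1 := by
    intro S
    have h1 : dimH S ≤ 1 := by
      have := dimH_mono (subset_univ S)
      rwa [Real.dimH_univ] at this
    have h2 := ENNReal.toReal_mono (b := 1) (by simp) h1
    simpa using h2
  -- nonnegativity and boundedness of dUpper/dLower
  have hUpos : ∀ n i, 0 ≤ dUpper α E (A n i) := by
    intro n i; unfold dUpper; split
    · exact mul_nonneg (le_trans zero_le_one (le_max_left _ _)) ENNReal.toReal_nonneg
    · exact le_rfl
  have hLpos : ∀ n i, 0 ≤ dLower α E (A n i) := by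
    intro n i; unfold dLower; split
    · exact mul_nonneg (le_trans zero_le_one (le_max_left _ _)) ENNReal.toReal_nonneg
    · exact le_rfl
  have hUbd : ∀ n i, dUpper α E (A n i) ≤ C := by
    intro n i; unfold dUpper; split
    · rename_i hne
      obtain ⟨hni, hba, hbb, hsup⟩ := himg n i hne
      have h1 : max 1 (sSup (α '' (E ∩ A n i))) ≤ C :=
        max_le hC1 (le_trans hsup (le_max_right _ _))
      calc max 1 (sSup (α '' (E ∩ A n i))) * (dimH (E ∩ A n i)).toReal
          ≤ C * 1 := mul_le_mul h1 (hdim _) ENNReal.toReal_nonneg (by linarith)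
        _ = C := mul_one C
    · linarith
  have hLU : ∀ n i, dLower α E (A n i) ≤ dUpper α E (A n i) := by
    intro n i; unfold dLower dUpper; split
    · rename_i hne
      obtain ⟨hni, hba, hbb, _⟩ := himg n i hne
      have h1 : sInf (α '' (E ∩ A n i)) ≤ sSup (α '' (E ∩ A n i)) :=
        csInf_le_csSup hni hbb hba
      exact mul_le_mul_of_nonneg_right (max_le_max le_rfl h1) ENNReal.toReal_nonneg
    · exact le_rfl
  have hLbd : ∀ n i, dLower α E (A n i) ≤ C := fun n i => (hLU n i).trans (hUbd n i)
  -- mesh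
  set M : ℕ → ℝ := fun n => ⨆ i, Metric.diam (A n i) with hM
  have hMbdd : ∀ n, BddAbove (Set.range fun i => Metric.diam (A n i)) :=
    fun n => Set.Finite.bddAbove (Set.finite_range _)
  have hMnn : ∀ n, 0 ≤ M n := fun n =>
    le_trans Metric.diam_nonneg (le_ciSup (hMbdd n) (0 : Fin (n+1)))
  have hdiamM : ∀ n i, Metric.diam (A n i) ≤ M n := fun n i => le_ciSup (hMbdd n) i
  -- key estimate
  have key : ∀ n i, dUpper α E (A n i) ≤ dLower α E (A n i) + K * M n := by
    intro n i
    have hKM : 0 ≤ K * M n := mul_nonneg hK (hMnn n)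
    unfold dUpper dLower; split
    · rename_i hne
      obtain ⟨hni, hba, hbb, _⟩ := himg n i hne
      have hSsub : E ∩ A n i ⊆ Set.Icc (0:ℝ) 1 := fun x hx => hE hx.1
      -- sSup - sInf ≤ K * diam (A n i)
      have hosc : sSup (α '' (E ∩ A n i)) ≤ sInf (α '' (E ∩ A n i)) + K * Metric.diam (A n i) := by
        refine csSup_le hni ?_
        rintro y ⟨s, hs, rfl⟩
        have h2 : α s - K * Metric.diam (A n i) ≤ sInf (α '' (E ∩ A n i)) := by
          refine le_csInf hni ?_
          rintro z ⟨t, ht, rfl⟩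
          have hd : dist s t ≤ Metric.diam (A n i) :=
            Metric.dist_le_diam_of_mem (hbddA n i) hs.2 ht.2
          have h3 : |α s - α t| ≤ K * Metric.diam (A n i) := by
            calc |α s - α t| ≤ K * |s - t| := hlip s (hSsub hs) t (hSsub ht)
              _ ≤ K * Metric.diam (A n i) := by
                  rw [← Real.dist_eq]; exact mul_le_mul_of_nonneg_left hd hK
          have := (abs_le.1 h3).1
          linarith [(abs_le.1 h3).2]
        linarith
      have hKd : K * Metric.diam (A n i) ≤ K * M n :=
        mul_le_mul_of_nonneg_left (hdiamM n i) hK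
      have hmax : max 1 (sSup (α '' (E ∩ A n i)))
          ≤ max 1 (sInf (α '' (E ∩ A n i))) + K * M n := by
        refine max_le (by linarith [le_max_left (1:ℝ) (sInf (α '' (E ∩ A n i)))]) ?_
        calc sSup (α '' (E ∩ A n i))
            ≤ sInf (α '' (E ∩ A n i)) + K * Metric.diam (A n i) := hosc
          _ ≤ max 1 (sInf (α '' (E ∩ A n i))) + K * M n := by
              have := le_max_right (1:ℝ) (sInf (α '' (E ∩ A n i)))
              linarith
      have hd0 : 0 ≤ (dimH (E ∩ A n i)).toReal := ENNReal.toReal_nonneg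
      have hd1 : (dimH (E ∩ A n i)).toReal ≤ 1 := hdim _
      calc max 1 (sSup (α '' (E ∩ A n i))) * (dimH (E ∩ A n i)).toReal
          ≤ (max 1 (sInf (α '' (E ∩ A n i))) + K * M n) * (dimH (E ∩ A n i)).toReal :=
            mul_le_mul_of_nonneg_right hmax hd0
        _ = max 1 (sInf (α '' (E ∩ A n i))) * (dimH (E ∩ A n i)).toReal
            + K * M n * (dimH (E ∩ A n i)).toReal := by ring
        _ ≤ max 1 (sInf (α '' (E ∩ A n i))) * (dimH (E ∩ A n i)).toReal + K * M n := by
            nlinarith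
    · linarith
  -- the two sequences
  set F : ℕ → ℝ := fun n => ⨆ i, dUpper α E (A n i) with hF
  set G : ℕ → ℝ := fun n => ⨆ i, dLower α E (A n i) with hG
  have hFbddr : ∀ n, BddAbove (Set.range fun i => dUpper α E (A n i)) :=
    fun n => Set.Finite.bddAbove (Set.finite_range _)
  have hGbddr : ∀ n, BddAbove (Set.range fun i => dLower α E (A n i)) :=
    fun n => Set.Finite.bddAbove (Set.finite_range _)
  have hF0 : ∀ n, 0 ≤ F n := fun n =>
    le_trans (hUpos n 0) (le_ciSup (hFbddr n) (0 : Fin (n+1)))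
  have hG0 : ∀ n, 0 ≤ G n := fun n =>
    le_trans (hLpos n 0) (le_ciSup (hGbddr n) (0 : Fin (n+1)))
  have hFC : ∀ n, F n ≤ C := fun n => ciSup_le fun i => hUbd n i
  have hGC : ∀ n, G n ≤ C := fun n => ciSup_le fun i => hLbd n i
  have hGF : ∀ n, G n ≤ F n := fun n =>
    ciSup_le fun i => le_trans (hLU n i) (le_ciSup (hFbddr n) i)
  have hFGK : ∀ n, F n ≤ G n + K * M n := fun n =>
    ciSup_le fun i => le_trans (key n i)
      (add_le_add_left (le_ciSup (hGbddr n) i) _)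
  have hKM0 : Tendsto (fun n => K * M n) atTop (nhds 0) := by
    have := hmesh.const_mul K
    simpa using this
  -- boundedness facts for limsup/liminf
  have hFba : atTop.IsBoundedUnder (· ≤ ·) F := Filter.isBoundedUnder_of ⟨C, hFC⟩
  have hGba : atTop.IsBoundedUnder (· ≤ ·) G := Filter.isBoundedUnder_of ⟨C, hGC⟩
  have hFbb : atTop.IsBoundedUnder (· ≥ ·) F := Filter.isBoundedUnder_of ⟨0, hF0⟩
  have hGbb : atTop.IsBoundedUnder (· ≥ ·) G := Filter.isBoundedUnder_of ⟨0, hG0⟩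
  constructor
  · refine le_antisymm ?_ ?_
    · refine le_of_forall_pos_le_add fun ε hε => ?_
      have hev : ∀ᶠ n in atTop, F n ≤ G n + ε := by
        filter_upwards [hKM0.eventually (gt_mem_nhds hε)] with n hn
        have := hFGK n
        linarith
      have hGεba : atTop.IsBoundedUnder (· ≤ ·) (fun n => G n + ε) :=
        Filter.isBoundedUnder_of ⟨C + ε, fun n => add_le_add_left (hGC n) ε⟩
      have h1 : limsup F atTop ≤ limsup (fun n => G n + ε) atTop :=
        limsup_le_limsup hev hFbb.isCoboundedUnder_le hGεba
      rwa [limsup_add_const atTop G ε hGba hGbb.isCoboundedUnder_le] at h1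
    · exact limsup_le_limsup (Eventually.of_forall hGF)
        hGbb.isCoboundedUnder_le hFba
  · refine le_antisymm ?_ ?_
    · refine le_of_forall_pos_le_add fun ε hε => ?_
      have hev : ∀ᶠ n in atTop, F n ≤ G n + ε := by
        filter_upwards [hKM0.eventually (gt_mem_nhds hε)] with n hn
        have := hFGK n
        linarith
      have hGεba : atTop.IsBoundedUnder (· ≤ ·) (fun n => G n + ε) :=
        Filter.isBoundedUnder_of ⟨C + ε, fun n => add_le_add_left (hGC n) ε⟩
      have h1 : liminf F atTop ≤ liminf (fun n => G n + ε) atTop :=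
        liminf_le_liminf hev hFbb hGεba.isCoboundedUnder_ge
      rwa [liminf_add_const atTop G ε hGba.isCoboundedUnder_ge hGbb] at h1
    · exact liminf_le_liminf (Eventually.of_forall hGF)
        hGbb hFba.isCoboundedUnder_ge
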